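/- Simultaneous validity: suppose for each pair (k, c) with 1 ≤ k ≤ n and c ∈ ℝ, p_{Z,k,c} = sup_{δ ∈ H_{k,c}} p_{Z,δ}, where p_{Z,τ} is a valid p-value at the true effect vector τ (P(p_{Z,τ} ≤ α) ≤ α). Then the confidence set ⋂_{(k,c): p_{Z,k,c} ≤ α} (H_{k,c})^∁ covers τ with probability at least 1 − α: P(τ ∈ ⋂_{(k,c): p_{Z,k,c} ≤ α} H_{k,c}^∁) ≥ 1 − α. In particular, the 1−α confidence intervals for all quantiles τ_(k) obtained by inverting these tests are simultaneously valid without multiplicity correction. -/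

import Mathlib

open Finset

/-- The `k`-th smallest coordinate (`k` is 1-indexed) of a vector in `ℝ^n`. -/
noncomputable def orderStat (n : ℕ) (τ : Fin n → ℝ) (k : ℕ) : ℝ :=
  (Multiset.sort (Multiset.map τ Finset.univ.val) (· ≤ ·)).getD (k - 1) 0

open Classical in
/-- simultaneous validity — the intersection over all `(k, c)` with
`p_{Z,k,c} ≤ α` of the complements of `H_{k,c}` covers the true effect vector `τ`
with probability at least `1 − α`. -/
theorem stmt18 (n : ℕ) {𝒵 : Type*} [Fintype 𝒵] (P : 𝒵 → ℝ)
    (hP0 : ∀ z, 0 ≤ P z) (hP1 : ∑ z, P z = 1)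
    (p : 𝒵 → (Fin n → ℝ) → ℝ) (hp : ∀ z δ, p z δ ∈ Set.Icc (0:ℝ) 1)
    (τ : Fin n → ℝ)
    (hvalid : ∀ α ∈ Set.Icc (0:ℝ) 1, (∑ z, if p z τ ≤ α then P z else 0) ≤ α) :
    ∀ α ∈ Set.Icc (0:ℝ) 1,
      1 - α ≤ ∑ z, if (∀ k, 1 ≤ k → k ≤ n → ∀ c : ℝ,
          sSup (p z '' {δ | orderStat n δ k ≤ c}) ≤ α → ¬ (orderStat n τ k ≤ c))
        then P z else 0 := by
  intro α hα
  -- key: if the condition fails for z, then p z τ ≤ α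
  have key : ∀ z, ¬ (∀ k, 1 ≤ k → k ≤ n → ∀ c : ℝ,
      sSup (p z '' {δ | orderStat n δ k ≤ c}) ≤ α → ¬ (orderStat n τ k ≤ c)) →
      p z τ ≤ α := by
    intro z hz
    push_neg at hz
    obtain ⟨k, hk1, hkn, c, hsup, hτ⟩ := hz
    have hmem : τ ∈ {δ | orderStat n δ k ≤ c} := hτ
    have hbdd : BddAbove (p z '' {δ | orderStat n δ k ≤ c}) :=
      ⟨1, fun x ⟨δ, _, hδ⟩ => hδ ▸ (hp z δ).2⟩
    exact le_trans (le_csSup hbdd ⟨τ, hmem, rfl⟩) hsup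
  have hmono : ∀ z, (if ¬ (p z τ ≤ α) then P z else 0) ≤
      (if (∀ k, 1 ≤ k → k ≤ n → ∀ c : ℝ,
          sSup (p z '' {δ | orderStat n δ k ≤ c}) ≤ α → ¬ (orderStat n τ k ≤ c))
        then P z else 0) := by
    intro z
    by_cases h : p z τ ≤ α
    · simp only [h, not_true, if_false]
      split <;> [exact hP0 z; exact le_refl 0]
    · have hc : (∀ k, 1 ≤ k → k ≤ n → ∀ c : ℝ,
          sSup (p z '' {δ | orderStat n δ k ≤ c}) ≤ α → ¬ (orderStat n τ k ≤ c)) := by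
        by_contra hcc
        exact h (key z hcc)
      rw [if_pos h, if_pos hc]
  calc 1 - α ≤ 1 - ∑ z, if p z τ ≤ α then P z else 0 := by
        linarith [hvalid α hα]
    _ = ∑ z, if ¬ (p z τ ≤ α) then P z else 0 := by
        rw [← hP1, ← Finset.sum_sub_distrib]
        apply Finset.sum_congr rfl
        intro z _
        by_cases h : p z τ ≤ α <;> simp [h]
    _ ≤ _ := Finset.sum_le_sum fun z _ => hmono z
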